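/- Let k_1 < k_2 < … < k_n be positive integers and let d be any positive integer. Then there exists a δ-set Σ = {s_1 < s_2 < … < s_l} with s_1 = d and a set of indices 1 ≤ j_1 < j_2 < … < j_n with j_n < l−1 such that s_{j_i + 1} − s_{j_i} = k_i for every i ∈ {1,…,n}. -/

import Mathlib

open SimpleGraph

lemma pathWalk_length_ge {N : ℕ} : ∀ {u v : Fin N} (w : (pathGraph N).Walk u v),
    max u.val v.val - min u.val v.val ≤ w.length := by
  intro u v w
  induction w with
  | nil => simp
  | @cons a b c h p ih =>
      rw [pathGraph_adj] at h
      rw [SimpleGraph.Walk.length_cons]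
      omega

lemma pathDist_le_aux {N : ℕ} (hc : (pathGraph N).Connected) :
    ∀ (m : ℕ) (u v : Fin N), u.val + m = v.val → (pathGraph N).dist u v ≤ m := by
  intro m
  induction m with
  | zero =>
      intro u v h
      have : u = v := Fin.ext (by omega)
      simp [this]
  | succ m ih =>
      intro u v h
      have hlt : u.val + 1 < N := by have := v.isLt; omega
      set u' : Fin N := ⟨u.val + 1, hlt⟩ with hu'
      have hadj : (pathGraph N).Adj u u' := pathGraph_adj.mpr (Or.inl rfl)
      have h1 : (pathGraph N).dist u u' = 1 := (dist_eq_one_iff_adj).mpr hadj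
      have h2 : (pathGraph N).dist u' v ≤ m := ih u' v (by simp [hu']; omega)
      calc (pathGraph N).dist u v ≤ (pathGraph N).dist u u' + (pathGraph N).dist u' v :=
            hc.dist_triangle
      _ ≤ 1 + m := by omega
      _ = m + 1 := by omega

lemma pathGraph_dist_eq {N : ℕ} (hc : (pathGraph N).Connected) (u v : Fin N) :
    (pathGraph N).dist u v = max u.val v.val - min u.val v.val := by
  refine le_antisymm ?_ ?_
  · rcases le_total u.val v.val with h | h
    · have := pathDist_le_aux hc (v.val - u.val) u v (by omega)
      omega
    · have := pathDist_le_aux hc (u.val - v.val) v u (by omega)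
      rw [SimpleGraph.dist_comm] at this
      omega
  · obtain ⟨w, hw⟩ := (hc.preconnected u v).exists_walk_length_eq_dist
    rw [← hw]
    exact pathWalk_length_ge w

lemma getD_strictSorted : ∀ {l : List ℕ}, l.Pairwise (· < ·) → ∀ {x : ℕ}, x ∈ l →
    l.getD (l.countP (fun y => y < x)) 0 = x := by
  intro l hl
  induction l with
  | nil => simp
  | cons a t ih =>
      intro x hx
      have ha : ∀ y ∈ t, a < y := fun y hy => (List.pairwise_cons.mp hl).1 y hy
      have ht : t.Pairwise (· < ·) := (List.pairwise_cons.mp hl).2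
      rw [List.countP_cons]
      rcases List.mem_cons.mp hx with rfl | hx'
      · have h0 : t.countP (fun y => decide (y < x)) = 0 :=
          List.countP_eq_zero.mpr (fun y hy => by
            simpa using Nat.not_lt.mpr (le_of_lt (ha y hy)))
        simp only [h0]
        simp
      · have hax : a < x := ha x hx'
        simp only [decide_eq_true_eq, if_pos hax]
        have := ih ht hx'
        simpa using this



namespace DG

variable (n : ℕ) (k : Fin n → ℕ) (d : ℕ)

def kk (i : ℕ) : ℕ := if h : i < n then k ⟨i, h⟩ else 1
def KK (i : ℕ) : ℕ := ∑ t ∈ Finset.range i, kk n k t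
def Kt : ℕ := KK n k n
def Pp : ℕ := 4 * Kt n k + 4 * d + 2 * n + 12
def Hh : ℕ := 3 * Kt n k + 3 * d + 2 * n + 12
def Tt : ℕ := 8 * Kt n k + 8 * d + 5 * n + 27
def cnt (m : ℕ) : ℕ := ((Finset.range (n + 2)).filter (fun i => KK n k i ≤ m)).card
def SA (m : ℕ) : ℕ := 2 * Tt n k d - Kt n k - n - 3 + m + cnt n k m
def cv (i : ℕ) : ℕ := 2 * Tt n k d + i + KK n k i - Kt n k - n - 3
def Phalf : ℕ := 2 * Kt n k + 2 * d + n + 6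
def piF (j : ℕ) : ℕ := if j < Phalf n k d then 2 * j + 1 else 2 * j - Pp n k d

def fam1 : List (ℕ × ℕ) := (List.range (Kt n k + 1)).map fun m => (Kt n k - m, SA n k d m)
def fam2 : List (ℕ × ℕ) := (List.range (Hh n k d)).map fun j =>
  (Kt n k + 1 + j, 2 * Tt n k d - Kt n k - n - d - 3 - j)
def fam3 : List (ℕ × ℕ) := (List.range (Pp n k d)).map fun j =>
  (Kt n k + Hh n k d + 1 + piF n k d j, Tt n k d + 1 + j)
def fam4 : List (ℕ × ℕ) := (List.range (n + 2)).map fun i =>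
  (Tt n k d - d - n - 2 + i, cv n k d i)
def fam5 : List (ℕ × ℕ) := [(Tt n k d - d, Tt n k d)]
def fam6 : List (ℕ × ℕ) := (List.range (d - 1)).map fun j =>
  (Tt n k d - 1 - j, 2 * Tt n k d - Kt n k - n - d - 2 + j)

def pairsL : List (ℕ × ℕ) :=
  fam1 n k d ++ fam2 n k d ++ fam3 n k d ++ fam4 n k d ++ fam5 n k d ++ fam6 n k d

def lab (p : ℕ × ℕ) : ℕ := p.2 - p.1

section facts
variable (hk : ∀ i, 0 < k i)

lemma kk_pos (hk : ∀ i, 0 < k i) (i : ℕ) : 0 < kk n k i := by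
  unfold kk; split
  · exact hk _
  · exact Nat.one_pos

lemma KK_succ (i : ℕ) : KK n k (i + 1) = KK n k i + kk n k i := by
  unfold KK; rw [Finset.sum_range_succ]

lemma KK_zero : KK n k 0 = 0 := by unfold KK; simp

lemma KK_mono {i j : ℕ} (h : i ≤ j) : KK n k i ≤ KK n k j := by
  unfold KK
  exact Finset.sum_le_sum_of_subset (Finset.range_subset_range.mpr h)

lemma KK_strict (hk : ∀ i, 0 < k i) {i j : ℕ} (h : i < j) : KK n k i < KK n k j := by
  have h1 : KK n k (i + 1) ≤ KK n k j := KK_mono n k h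
  have h2 := KK_succ n k i
  have h3 := kk_pos n k hk i
  omega

lemma KK_nsucc : KK n k (n + 1) = Kt n k + 1 := by
  have := KK_succ n k n
  unfold kk at this
  simp at this
  rw [this]; rfl

lemma KK_le_Kt {i : ℕ} (h : i ≤ n) : KK n k i ≤ Kt n k := KK_mono n k h

lemma KK_le_Kt1 {i : ℕ} (h : i ≤ n + 1) : KK n k i ≤ Kt n k + 1 := by
  have := KK_mono n k (j := n + 1) h
  rw [KK_nsucc] at this
  exact this

lemma cnt_mono {m m' : ℕ} (h : m ≤ m') : cnt n k m ≤ cnt n k m' := by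
  unfold cnt
  apply Finset.card_le_card
  intro i hi
  simp only [Finset.mem_filter] at *
  exact ⟨hi.1, le_trans hi.2 h⟩

lemma cnt_pos (m : ℕ) : 1 ≤ cnt n k m := by
  unfold cnt
  rw [Nat.one_le_iff_ne_zero, ← Nat.pos_iff_ne_zero, Finset.card_pos]
  exact ⟨0, by simp [KK_zero]⟩

lemma cnt_le (m : ℕ) : cnt n k m ≤ n + 2 := by
  unfold cnt
  calc _ ≤ (Finset.range (n+2)).card := Finset.card_le_card (Finset.filter_subset _ _)
  _ = n + 2 := by simp

lemma cnt_le_of_le {m : ℕ} (h : m ≤ Kt n k) : cnt n k m ≤ n + 1 := by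
  unfold cnt
  have hsub : (Finset.range (n + 2)).filter (fun i => KK n k i ≤ m) ⊆ Finset.range (n + 1) := by
    intro i hi
    simp only [Finset.mem_filter, Finset.mem_range] at *
    rcases hi with ⟨hi1, hi2⟩
    by_contra hc
    have : i = n + 1 := by omega
    subst this
    rw [KK_nsucc n k] at hi2
    omega
  calc _ ≤ (Finset.range (n+1)).card := Finset.card_le_card hsub
  _ = n + 1 := by simp

lemma cnt_lower {i m : ℕ} (hi : i ≤ n + 1) (h : KK n k i ≤ m) : i + 1 ≤ cnt n k m := by
  unfold cnt
  have hsub : Finset.range (i + 1) ⊆ (Finset.range (n + 2)).filter (fun t => KK n k t ≤ m) := by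
    intro t ht
    simp only [Finset.mem_range] at ht
    simp only [Finset.mem_filter, Finset.mem_range]
    exact ⟨by omega, le_trans (KK_mono n k (by omega)) h⟩
  calc i + 1 = (Finset.range (i+1)).card := by simp
  _ ≤ _ := Finset.card_le_card hsub

lemma cnt_upper {i m : ℕ} (h : m < KK n k i) : cnt n k m ≤ i := by
  unfold cnt
  have hsub : (Finset.range (n + 2)).filter (fun t => KK n k t ≤ m) ⊆ Finset.range i := by
    intro t ht
    simp only [Finset.mem_filter, Finset.mem_range] at *
    rcases ht with ⟨_, ht2⟩
    by_contra hc
    have := KK_mono n k (i := i) (j := t) (by omega)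
    omega
  calc _ ≤ (Finset.range i).card := Finset.card_le_card hsub
  _ = i := by simp

lemma SA_ne_cv {m i : ℕ} (hi : i ≤ n + 1) : SA n k d m ≠ cv n k d i := by
  unfold SA cv
  intro hEq
  have hT : Kt n k + n + 3 ≤ 2 * Tt n k d := by unfold Tt; omega
  have key : m + cnt n k m = i + KK n k i := by omega
  rcases le_or_gt (KK n k i) m with h | h
  · have := cnt_lower n k hi h
    omega
  · have := cnt_upper n k h
    omega

end facts
end DG

-- appended to base
namespace DG
section facts2
variable (n : ℕ) (k : Fin n → ℕ) (d : ℕ) (hk : ∀ i, 0 < k i) (hd : 0 < d)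

lemma Pp_eq : Pp n k d = 2 * Phalf n k d := by unfold Pp Phalf; ring

lemma piF_lt {j : ℕ} (h : j < Pp n k d) : piF n k d j < Pp n k d := by
  have h2 := Pp_eq n k d
  unfold piF
  split <;> omega

lemma piF_inj {j j' : ℕ} (h : j < Pp n k d) (h' : j' < Pp n k d)
    (he : piF n k d j = piF n k d j') : j = j' := by
  have h2 := Pp_eq n k d
  unfold piF at he
  split at he <;> split at he <;> omega

lemma SA_step {m m' : ℕ} (h : m ≤ m') :
    SA n k d m + (m' - m) ≤ SA n k d m' := by
  unfold SA
  have := cnt_mono n k h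
  have hT : Kt n k + n + 3 ≤ 2 * Tt n k d := by unfold Tt; omega
  omega

lemma SA_lb (m : ℕ) : 2 * Tt n k d - Kt n k - n - 2 + m ≤ SA n k d m := by
  unfold SA
  have := cnt_pos n k m
  have hT : Kt n k + n + 3 ≤ 2 * Tt n k d := by unfold Tt; omega
  omega

/-- Convenient collected bounds: for `m ≤ Kt`, `SA m` lies in the top block minus chain ends. -/
lemma SA_mem {m : ℕ} (h : m ≤ Kt n k) :
    2 * Tt n k d - Kt n k - n - 2 ≤ SA n k d m ∧ SA n k d m ≤ 2 * Tt n k d - 2 := by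
  unfold SA
  have h1 := cnt_pos n k m
  have h2 := cnt_le_of_le n k h
  have hT : Kt n k + n + 3 ≤ 2 * Tt n k d := by unfold Tt; omega
  omega

lemma cv_spec {i : ℕ} (h : i ≤ n + 1) :
    cv n k d i + Kt n k + n + 3 = 2 * Tt n k d + i + KK n k i := by
  unfold cv
  have hT : Kt n k + n + 3 ≤ 2 * Tt n k d := by unfold Tt; omega
  omega

end facts2
end DG

namespace DG
section facts3
variable (n : ℕ) (k : Fin n → ℕ) (d : ℕ)

-- handy rfl-lemmas
lemma hT_eq : Tt n k d = 8 * Kt n k + 8*d + 5*n + 27 := rfl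
lemma hP_eq : Pp n k d = 4 * Kt n k + 4*d + 2*n + 12 := rfl
lemma hH_eq : Hh n k d = 3 * Kt n k + 3*d + 2*n + 12 := rfl
lemma hPh_eq : Phalf n k d = 2 * Kt n k + 2*d + n + 6 := rfl

/-- chain label -/
def cl (i : ℕ) : ℕ := Tt n k d + d + KK n k i - Kt n k - 1

lemma cl_spec {i : ℕ} (h : i ≤ n + 1) :
    cl n k d i + Kt n k + 1 = Tt n k d + d + KK n k i := by
  unfold cl
  have := hT_eq n k d
  omega

lemma lab_f4 {i : ℕ} (h : i ≤ n + 1) (hkp : ∀ i, 0 < k i) :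
    cv n k d i - (Tt n k d - d - n - 2 + i) = cl n k d i := by
  have h1 := cv_spec n k d h
  have h2 := cl_spec n k d h
  have h3 := hT_eq n k d
  have h4 : KK n k i ≤ Kt n k + 1 := KK_le_Kt1 n k h
  omega

lemma cl_bounds (hkp : ∀ i, 0 < k i) {i : ℕ} (h : i ≤ n + 1) :
    Tt n k d + d - Kt n k - 1 ≤ cl n k d i ∧ cl n k d i ≤ Tt n k d + d := by
  have h2 := cl_spec n k d h
  have h3 := hT_eq n k d
  have h4 : KK n k i ≤ Kt n k + 1 := KK_le_Kt1 n k h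
  omega

lemma cl_strict (hkp : ∀ i, 0 < k i) {i j : ℕ} (hij : i < j) (hj : j ≤ n + 1) :
    cl n k d i < cl n k d j := by
  have h2 := cl_spec n k d (le_trans (le_of_lt hij) hj)
  have h2' := cl_spec n k d hj
  have h5 := KK_strict n k hkp hij
  omega

lemma lab_f1 {m : ℕ} (h : m ≤ Kt n k) :
    SA n k d m - (Kt n k - m) ≥ 2 * Tt n k d - 2 * Kt n k - n - 2 ∧
    SA n k d m - (Kt n k - m) ≤ 2 * Tt n k d - 2 := by
  have h1 := SA_mem n k d h
  have h3 := hT_eq n k d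
  omega

lemma lab_f1_inj {m m' : ℕ} (h : m < m') (h' : m' ≤ Kt n k) :
    SA n k d m - (Kt n k - m) < SA n k d m' - (Kt n k - m') := by
  have h1 := SA_step n k d (le_of_lt h)
  have h2 := SA_mem n k d (le_trans (le_of_lt h) h')
  have h3 := hT_eq n k d
  omega

lemma lab_f3 {j : ℕ} (hj : j < Pp n k d) :
    (Tt n k d + 1 + j) - (Kt n k + Hh n k d + 1 + piF n k d j)
      = if j < Phalf n k d then Tt n k d - Kt n k - Hh n k d - 1 - j
        else Tt n k d - Kt n k - Hh n k d + Pp n k d - j := by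
  have h1 := hT_eq n k d
  have h2 := hP_eq n k d
  have h3 := hH_eq n k d
  have h4 := hPh_eq n k d
  unfold piF
  split <;> omega

lemma lab_f3_bounds {j : ℕ} (hj : j < Pp n k d) :
    2 * Kt n k + 3*d + 2*n + 9 ≤ (Tt n k d + 1 + j) - (Kt n k + Hh n k d + 1 + piF n k d j) ∧
    (Tt n k d + 1 + j) - (Kt n k + Hh n k d + 1 + piF n k d j) ≤ 6 * Kt n k + 7*d + 4*n + 21 := by
  rw [lab_f3 n k d hj]
  have h1 := hT_eq n k d
  have h2 := hP_eq n k d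
  have h3 := hH_eq n k d
  have h4 := hPh_eq n k d
  split <;> omega

lemma lab_f3_inj {j j' : ℕ} (hj : j < Pp n k d) (hj' : j' < Pp n k d)
    (he : (Tt n k d + 1 + j) - (Kt n k + Hh n k d + 1 + piF n k d j)
        = (Tt n k d + 1 + j') - (Kt n k + Hh n k d + 1 + piF n k d j')) : j = j' := by
  rw [lab_f3 n k d hj, lab_f3 n k d hj'] at he
  have h1 := hT_eq n k d
  have h2 := hP_eq n k d
  have h3 := hH_eq n k d
  have h4 := hPh_eq n k d
  split at he <;> split at he <;> omega

end facts3
end DG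

namespace DG

lemma disjoint_of_bounds {l l' : List ℕ} {hi lo : ℕ}
    (h1 : ∀ x ∈ l, x ≤ hi) (h2 : ∀ x ∈ l', lo ≤ x) (h : hi < lo) : l.Disjoint l' := by
  intro a ha ha'
  have := h1 a ha; have := h2 a ha'; omega

section fam
variable (n : ℕ) (k : Fin n → ℕ) (d : ℕ)

-- ## membership decompositions
lemma mem_f1 {p : ℕ × ℕ} (hp : p ∈ fam1 n k d) :
    ∃ m ≤ Kt n k, p = (Kt n k - m, SA n k d m) := by
  simp only [fam1, List.mem_map, List.mem_range] at hp
  obtain ⟨m, hm, rfl⟩ := hp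
  exact ⟨m, by omega, rfl⟩

lemma mem_f2 {p : ℕ × ℕ} (hp : p ∈ fam2 n k d) :
    ∃ j < Hh n k d, p = (Kt n k + 1 + j, 2 * Tt n k d - Kt n k - n - d - 3 - j) := by
  simp only [fam2, List.mem_map, List.mem_range] at hp
  obtain ⟨j, hj, rfl⟩ := hp
  exact ⟨j, hj, rfl⟩

lemma mem_f3 {p : ℕ × ℕ} (hp : p ∈ fam3 n k d) :
    ∃ j < Pp n k d, p = (Kt n k + Hh n k d + 1 + piF n k d j, Tt n k d + 1 + j) := by
  simp only [fam3, List.mem_map, List.mem_range] at hp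
  obtain ⟨j, hj, rfl⟩ := hp
  exact ⟨j, hj, rfl⟩

lemma mem_f4 {p : ℕ × ℕ} (hp : p ∈ fam4 n k d) :
    ∃ i ≤ n + 1, p = (Tt n k d - d - n - 2 + i, cv n k d i) := by
  simp only [fam4, List.mem_map, List.mem_range] at hp
  obtain ⟨i, hi, rfl⟩ := hp
  exact ⟨i, by omega, rfl⟩

lemma mem_f5 {p : ℕ × ℕ} (hp : p ∈ fam5 n k d) : p = (Tt n k d - d, Tt n k d) := by
  simp only [fam5, List.mem_singleton] at hp; exact hp

lemma mem_f6 {p : ℕ × ℕ} (hp : p ∈ fam6 n k d) :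
    ∃ j, j + 2 ≤ d ∧ p = (Tt n k d - 1 - j, 2 * Tt n k d - Kt n k - n - d - 2 + j) := by
  simp only [fam6, List.mem_map, List.mem_range] at hp
  obtain ⟨j, hj, rfl⟩ := hp
  exact ⟨j, by omega, rfl⟩

-- ## fst bounds
lemma f1Fst_bd : ∀ p ∈ fam1 n k d, p.1 ≤ Kt n k := by
  intro p hp; obtain ⟨m, hm, rfl⟩ := mem_f1 n k d hp; simp

lemma f2Fst_bd : ∀ p ∈ fam2 n k d,
    Kt n k + 1 ≤ p.1 ∧ p.1 ≤ Kt n k + Hh n k d := by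
  intro p hp; obtain ⟨j, hj, rfl⟩ := mem_f2 n k d hp; simp; omega

lemma f3Fst_bd : ∀ p ∈ fam3 n k d,
    Kt n k + Hh n k d + 1 ≤ p.1 ∧ p.1 ≤ Kt n k + Hh n k d + Pp n k d := by
  intro p hp; obtain ⟨j, hj, rfl⟩ := mem_f3 n k d hp
  have h1 := piF_lt n k d hj
  simp; omega

lemma f4Fst_bd : ∀ p ∈ fam4 n k d,
    Tt n k d - d - n - 2 ≤ p.1 ∧ p.1 ≤ Tt n k d - d - 1 := by
  intro p hp; obtain ⟨i, hi, rfl⟩ := mem_f4 n k d hp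
  have := hT_eq n k d
  simp; omega

lemma f5Fst_bd : ∀ p ∈ fam5 n k d, p.1 = Tt n k d - d := by
  intro p hp; rw [mem_f5 n k d hp]

lemma f6Fst_bd (hd : 0 < d) : ∀ p ∈ fam6 n k d,
    Tt n k d - d + 1 ≤ p.1 ∧ p.1 ≤ Tt n k d - 1 := by
  intro p hp; obtain ⟨j, hj, rfl⟩ := mem_f6 n k d hp
  have := hT_eq n k d
  simp; omega

-- ## snd bounds
lemma f1Snd_bd : ∀ p ∈ fam1 n k d,
    2 * Tt n k d - Kt n k - n - 2 ≤ p.2 ∧ p.2 ≤ 2 * Tt n k d - 2 := by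
  intro p hp; obtain ⟨m, hm, rfl⟩ := mem_f1 n k d hp
  exact SA_mem n k d hm

lemma f2Snd_bd : ∀ p ∈ fam2 n k d,
    Tt n k d + Pp n k d + 1 ≤ p.2 ∧ p.2 ≤ 2 * Tt n k d - Kt n k - n - d - 3 := by
  intro p hp; obtain ⟨j, hj, rfl⟩ := mem_f2 n k d hp
  have := hT_eq n k d; have := hP_eq n k d; have := hH_eq n k d
  simp; omega

lemma f3Snd_bd : ∀ p ∈ fam3 n k d,
    Tt n k d + 1 ≤ p.2 ∧ p.2 ≤ Tt n k d + Pp n k d := by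
  intro p hp; obtain ⟨j, hj, rfl⟩ := mem_f3 n k d hp
  simp; omega

lemma f4Snd_bd : ∀ p ∈ fam4 n k d,
    2 * Tt n k d - Kt n k - n - 3 ≤ p.2 ∧ p.2 ≤ 2 * Tt n k d - 1 := by
  intro p hp; obtain ⟨i, hi, rfl⟩ := mem_f4 n k d hp
  have h1 := cv_spec n k d hi
  have h2 : KK n k i ≤ Kt n k + 1 := KK_le_Kt1 n k hi
  have := hT_eq n k d
  simp; omega

lemma f5Snd_bd : ∀ p ∈ fam5 n k d, p.2 = Tt n k d := by
  intro p hp; rw [mem_f5 n k d hp]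

lemma f6Snd_bd : ∀ p ∈ fam6 n k d,
    2 * Tt n k d - Kt n k - n - d - 2 ≤ p.2 ∧ p.2 ≤ 2 * Tt n k d - Kt n k - n - 4 := by
  intro p hp; obtain ⟨j, hj, rfl⟩ := mem_f6 n k d hp
  have := hT_eq n k d
  simp; omega

-- ## lab bounds
lemma f1Lab_bd : ∀ p ∈ fam1 n k d,
    2 * Tt n k d - 2 * Kt n k - n - 2 ≤ lab p ∧ lab p ≤ 2 * Tt n k d - 2 := by
  intro p hp; obtain ⟨m, hm, rfl⟩ := mem_f1 n k d hp
  have := lab_f1 n k d hm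
  simp only [lab]; omega

lemma f2Lab_bd : ∀ p ∈ fam2 n k d,
    8 * Kt n k + 9*d + 5*n + 28 ≤ lab p ∧ lab p ≤ 14 * Kt n k + 15*d + 9*n + 50 := by
  intro p hp; obtain ⟨j, hj, rfl⟩ := mem_f2 n k d hp
  have := hT_eq n k d; have := hH_eq n k d
  simp only [lab]; omega

lemma f3Lab_bd : ∀ p ∈ fam3 n k d,
    2 * Kt n k + 3*d + 2*n + 9 ≤ lab p ∧ lab p ≤ 6 * Kt n k + 7*d + 4*n + 21 := by
  intro p hp; obtain ⟨j, hj, rfl⟩ := mem_f3 n k d hp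
  exact lab_f3_bounds n k d hj

lemma f4Lab_bd (hkp : ∀ i, 0 < k i) : ∀ p ∈ fam4 n k d,
    Tt n k d + d - Kt n k - 1 ≤ lab p ∧ lab p ≤ Tt n k d + d := by
  intro p hp; obtain ⟨i, hi, rfl⟩ := mem_f4 n k d hp
  have h1 := lab_f4 n k d hi hkp
  have h2 := cl_bounds n k d hkp hi
  simp only [lab] at *
  simp at h1 ⊢
  omega

lemma f5Lab_bd : ∀ p ∈ fam5 n k d, lab p = d := by
  intro p hp; rw [mem_f5 n k d hp]
  have := hT_eq n k d
  simp only [lab]; omega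

lemma f6Lab_bd : ∀ p ∈ fam6 n k d,
    7 * Kt n k + 7*d + 4*n + 26 ≤ lab p ∧ lab p ≤ 7 * Kt n k + 9*d + 4*n + 22 := by
  intro p hp; obtain ⟨j, hj, rfl⟩ := mem_f6 n k d hp
  have := hT_eq n k d
  simp only [lab]; omega

end fam
end DG

namespace DG

lemma nodup_map_range {N : ℕ} {g : ℕ → ℕ}
    (h : ∀ x < N, ∀ y < N, g x = g y → x = y) : ((List.range N).map g).Nodup := by
  apply List.Nodup.map_on _ List.nodup_range
  intro x hx y hy
  exact h x (List.mem_range.mp hx) y (List.mem_range.mp hy)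

section nodups
variable (n : ℕ) (k : Fin n → ℕ) (d : ℕ)

lemma f1_nodup_fst : ((fam1 n k d).map Prod.fst).Nodup := by
  unfold fam1; rw [List.map_map]
  exact nodup_map_range (fun x hx y hy he => by simp at he; omega)

lemma f2_nodup_fst : ((fam2 n k d).map Prod.fst).Nodup := by
  unfold fam2; rw [List.map_map]
  exact nodup_map_range (fun x hx y hy he => by simp at he; omega)

lemma f3_nodup_fst : ((fam3 n k d).map Prod.fst).Nodup := by
  unfold fam3; rw [List.map_map]
  refine nodup_map_range (fun x hx y hy he => ?_)
  simp at he
  exact piF_inj n k d hx hy he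

lemma f4_nodup_fst : ((fam4 n k d).map Prod.fst).Nodup := by
  unfold fam4; rw [List.map_map]
  exact nodup_map_range (fun x hx y hy he => by simp at he; omega)

lemma f5_nodup_fst : ((fam5 n k d).map Prod.fst).Nodup := by simp [fam5]

lemma f6_nodup_fst : ((fam6 n k d).map Prod.fst).Nodup := by
  unfold fam6; rw [List.map_map]
  have := hT_eq n k d
  exact nodup_map_range (fun x hx y hy he => by simp at he; omega)

lemma f1_nodup_snd : ((fam1 n k d).map Prod.snd).Nodup := by
  unfold fam1; rw [List.map_map]
  refine nodup_map_range (fun x hx y hy he => ?_)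
  simp at he
  rcases Nat.lt_trichotomy x y with h | h | h
  · have := SA_step n k d (le_of_lt h); omega
  · exact h
  · have := SA_step n k (d := d) (le_of_lt h); omega

lemma f2_nodup_snd : ((fam2 n k d).map Prod.snd).Nodup := by
  unfold fam2; rw [List.map_map]
  have h1 := hT_eq n k d; have h2 := hH_eq n k d
  exact nodup_map_range (fun x hx y hy he => by simp at he; omega)

lemma f3_nodup_snd : ((fam3 n k d).map Prod.snd).Nodup := by
  unfold fam3; rw [List.map_map]
  exact nodup_map_range (fun x hx y hy he => by simp at he; omega)

lemma f4_nodup_snd (hkp : ∀ i, 0 < k i) : ((fam4 n k d).map Prod.snd).Nodup := by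
  unfold fam4; rw [List.map_map]
  refine nodup_map_range (fun x hx y hy he => ?_)
  simp at he
  rcases Nat.lt_trichotomy x y with h | h | h
  · have h1 := cv_spec n k d (i := x) (by omega)
    have h2 := cv_spec n k d (i := y) (by omega)
    have := KK_strict n k hkp h
    omega
  · exact h
  · have h1 := cv_spec n k d (i := x) (by omega)
    have h2 := cv_spec n k d (i := y) (by omega)
    have := KK_strict n k hkp h
    omega

lemma f5_nodup_snd : ((fam5 n k d).map Prod.snd).Nodup := by simp [fam5]

lemma f6_nodup_snd : ((fam6 n k d).map Prod.snd).Nodup := by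
  unfold fam6; rw [List.map_map]
  exact nodup_map_range (fun x hx y hy he => by simp at he; omega)

lemma f1_nodup_lab : ((fam1 n k d).map lab).Nodup := by
  unfold fam1; rw [List.map_map]
  refine nodup_map_range (fun x hx y hy he => ?_)
  simp only [Function.comp, lab] at he
  rcases Nat.lt_trichotomy x y with h | h | h
  · have := lab_f1_inj n k d h (by omega); omega
  · exact h
  · have := lab_f1_inj n k d h (by omega); omega

lemma f2_nodup_lab : ((fam2 n k d).map lab).Nodup := by
  unfold fam2; rw [List.map_map]
  have h1 := hT_eq n k d; have h2 := hH_eq n k d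
  refine nodup_map_range (fun x hx y hy he => ?_)
  simp only [Function.comp, lab] at he
  omega

lemma f3_nodup_lab : ((fam3 n k d).map lab).Nodup := by
  unfold fam3; rw [List.map_map]
  refine nodup_map_range (fun x hx y hy he => ?_)
  simp only [Function.comp, lab] at he
  exact lab_f3_inj n k d hx hy he

lemma f4_nodup_lab (hkp : ∀ i, 0 < k i) : ((fam4 n k d).map lab).Nodup := by
  unfold fam4; rw [List.map_map]
  refine nodup_map_range (fun x hx y hy he => ?_)
  simp only [Function.comp, lab] at he
  have hx4 := lab_f4 n k d (i := x) (by omega) hkp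
  have hy4 := lab_f4 n k d (i := y) (by omega) hkp
  rcases Nat.lt_trichotomy x y with h | h | h
  · have := cl_strict n k d hkp h (by omega); omega
  · exact h
  · have := cl_strict n k d hkp h (by omega); omega

lemma f5_nodup_lab : ((fam5 n k d).map lab).Nodup := by simp [fam5]

lemma f6_nodup_lab : ((fam6 n k d).map lab).Nodup := by
  unfold fam6; rw [List.map_map]
  have h1 := hT_eq n k d
  refine nodup_map_range (fun x hx y hy he => ?_)
  simp only [Function.comp, lab] at he
  omega

end nodups
end DG

namespace DG

lemma bd_map {α : Type*} {l : List α} {f : α → ℕ} {P : ℕ → Prop}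
    (h : ∀ p ∈ l, P (f p)) : ∀ x ∈ l.map f, P x := by
  intro x hx
  obtain ⟨p, hp, rfl⟩ := List.mem_map.mp hx
  exact h p hp

section global
variable (n : ℕ) (k : Fin n → ℕ) (d : ℕ)

lemma pairsL_len (hd : 0 < d) : (pairsL n k d).length = Tt n k d := by
  have h1 := hT_eq n k d; have h2 := hP_eq n k d; have h3 := hH_eq n k d
  simp [pairsL, fam1, fam2, fam3, fam4, fam5, fam6]
  omega

lemma pairs_fst_lt (hd : 0 < d) : ∀ p ∈ pairsL n k d, p.1 < Tt n k d := by
  intro p hp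
  have h1 := hT_eq n k d; have h2 := hP_eq n k d; have h3 := hH_eq n k d
  simp only [pairsL, List.mem_append] at hp
  rcases hp with ((((h|h)|h)|h)|h)|h
  · have := f1Fst_bd n k d p h; omega
  · have := f2Fst_bd n k d p h; omega
  · have := f3Fst_bd n k d p h; omega
  · have := f4Fst_bd n k d p h; omega
  · have := f5Fst_bd n k d p h; omega
  · have := f6Fst_bd n k d hd p h; omega

lemma pairs_snd_bd : ∀ p ∈ pairsL n k d,
    Tt n k d ≤ p.2 ∧ p.2 < 2 * Tt n k d := by
  intro p hp
  have h1 := hT_eq n k d; have h2 := hP_eq n k d; have h3 := hH_eq n k d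
  simp only [pairsL, List.mem_append] at hp
  rcases hp with ((((h|h)|h)|h)|h)|h
  · have := f1Snd_bd n k d p h; omega
  · have := f2Snd_bd n k d p h; omega
  · have := f3Snd_bd n k d p h; omega
  · have := f4Snd_bd n k d p h; omega
  · have := f5Snd_bd n k d p h; omega
  · have := f6Snd_bd n k d p h; omega

lemma pairs_lab_ge (hkp : ∀ i, 0 < k i) : ∀ p ∈ pairsL n k d, d ≤ lab p := by
  intro p hp
  have h1 := hT_eq n k d
  simp only [pairsL, List.mem_append] at hp
  rcases hp with ((((h|h)|h)|h)|h)|h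
  · have := f1Lab_bd n k d p h; omega
  · have := f2Lab_bd n k d p h; omega
  · have := f3Lab_bd n k d p h; omega
  · have := f4Lab_bd n k d hkp p h; omega
  · have := f5Lab_bd n k d p h; omega
  · have := f6Lab_bd n k d p h; omega

lemma pairs_fst_nodup (hd : 0 < d) : ((pairsL n k d).map Prod.fst).Nodup := by
  have h1 := hT_eq n k d; have h2 := hP_eq n k d; have h3 := hH_eq n k d
  have b1 : ∀ x ∈ (fam1 n k d).map Prod.fst, x ≤ Kt n k := bd_map (f1Fst_bd n k d)
  have b2 : ∀ x ∈ (fam2 n k d).map Prod.fst,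
      Kt n k + 1 ≤ x ∧ x ≤ Kt n k + Hh n k d := bd_map (f2Fst_bd n k d)
  have b3 : ∀ x ∈ (fam3 n k d).map Prod.fst,
      Kt n k + Hh n k d + 1 ≤ x ∧ x ≤ Kt n k + Hh n k d + Pp n k d := bd_map (f3Fst_bd n k d)
  have b4 : ∀ x ∈ (fam4 n k d).map Prod.fst,
      Tt n k d - d - n - 2 ≤ x ∧ x ≤ Tt n k d - d - 1 := bd_map (f4Fst_bd n k d)
  have b5 : ∀ x ∈ (fam5 n k d).map Prod.fst, x = Tt n k d - d := bd_map (f5Fst_bd n k d)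
  have b6 : ∀ x ∈ (fam6 n k d).map Prod.fst,
      Tt n k d - d + 1 ≤ x ∧ x ≤ Tt n k d - 1 := bd_map (f6Fst_bd n k d hd)
  simp only [pairsL, List.map_append, List.append_assoc]
  refine (f1_nodup_fst n k d).append ?_ ?_
  · refine (f2_nodup_fst n k d).append ?_ ?_
    · refine (f3_nodup_fst n k d).append ?_ ?_
      · refine (f4_nodup_fst n k d).append ?_ ?_
        · refine (f5_nodup_fst n k d).append (f6_nodup_fst n k d) ?_
          · exact disjoint_of_bounds (fun x hx => le_of_eq (b5 x hx))
              (fun x hx => (b6 x hx).1) (by omega)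
        · simp only [List.disjoint_append_right]
          refine ⟨?_, ?_⟩
          · exact disjoint_of_bounds (fun x hx => (b4 x hx).2)
              (fun x hx => ge_of_eq (b5 x hx)) (by omega)
          · exact disjoint_of_bounds (fun x hx => (b4 x hx).2)
              (fun x hx => (b6 x hx).1) (by omega)
      · simp only [List.disjoint_append_right]
        refine ⟨?_, ?_, ?_⟩
        · exact disjoint_of_bounds (fun x hx => (b3 x hx).2)
            (fun x hx => (b4 x hx).1) (by omega)
        · exact disjoint_of_bounds (fun x hx => (b3 x hx).2)
            (fun x hx => ge_of_eq (b5 x hx)) (by omega)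
        · exact disjoint_of_bounds (fun x hx => (b3 x hx).2)
            (fun x hx => (b6 x hx).1) (by omega)
    · simp only [List.disjoint_append_right]
      refine ⟨?_, ?_, ?_, ?_⟩
      · exact disjoint_of_bounds (fun x hx => (b2 x hx).2)
          (fun x hx => (b3 x hx).1) (by omega)
      · exact disjoint_of_bounds (fun x hx => (b2 x hx).2)
          (fun x hx => (b4 x hx).1) (by omega)
      · exact disjoint_of_bounds (fun x hx => (b2 x hx).2)
          (fun x hx => ge_of_eq (b5 x hx)) (by omega)
      · exact disjoint_of_bounds (fun x hx => (b2 x hx).2)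
          (fun x hx => (b6 x hx).1) (by omega)
  · simp only [List.disjoint_append_right]
    refine ⟨?_, ?_, ?_, ?_, ?_⟩
    · exact disjoint_of_bounds (fun x hx => b1 x hx)
        (fun x hx => (b2 x hx).1) (by omega)
    · exact disjoint_of_bounds (fun x hx => b1 x hx)
        (fun x hx => (b3 x hx).1) (by omega)
    · exact disjoint_of_bounds (fun x hx => b1 x hx)
        (fun x hx => (b4 x hx).1) (by omega)
    · exact disjoint_of_bounds (fun x hx => b1 x hx)
        (fun x hx => ge_of_eq (b5 x hx)) (by omega)
    · exact disjoint_of_bounds (fun x hx => b1 x hx)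
        (fun x hx => (b6 x hx).1) (by omega)

end global
end DG

namespace DG
section global2
variable (n : ℕ) (k : Fin n → ℕ) (d : ℕ)

lemma f1f4_snd_disj :
    ((fam1 n k d).map Prod.snd).Disjoint ((fam4 n k d).map Prod.snd) := by
  intro a ha ha'
  obtain ⟨p, hp, rfl⟩ := List.mem_map.mp ha
  obtain ⟨q, hq, he⟩ := List.mem_map.mp ha'
  obtain ⟨m, hm, rfl⟩ := mem_f1 n k d hp
  obtain ⟨i, hi, rfl⟩ := mem_f4 n k d hq
  simp only at he
  exact SA_ne_cv n k d hi he.symm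

lemma pairs_snd_nodup (hd : 0 < d) (hkp : ∀ i, 0 < k i) :
    ((pairsL n k d).map Prod.snd).Nodup := by
  have h1 := hT_eq n k d; have h2 := hP_eq n k d; have h3 := hH_eq n k d
  have b1 : ∀ x ∈ (fam1 n k d).map Prod.snd,
      2 * Tt n k d - Kt n k - n - 2 ≤ x ∧ x ≤ 2 * Tt n k d - 2 := bd_map (f1Snd_bd n k d)
  have b2 : ∀ x ∈ (fam2 n k d).map Prod.snd,
      Tt n k d + Pp n k d + 1 ≤ x ∧ x ≤ 2 * Tt n k d - Kt n k - n - d - 3 :=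
    bd_map (f2Snd_bd n k d)
  have b3 : ∀ x ∈ (fam3 n k d).map Prod.snd,
      Tt n k d + 1 ≤ x ∧ x ≤ Tt n k d + Pp n k d := bd_map (f3Snd_bd n k d)
  have b4 : ∀ x ∈ (fam4 n k d).map Prod.snd,
      2 * Tt n k d - Kt n k - n - 3 ≤ x ∧ x ≤ 2 * Tt n k d - 1 := bd_map (f4Snd_bd n k d)
  have b5 : ∀ x ∈ (fam5 n k d).map Prod.snd, x = Tt n k d := bd_map (f5Snd_bd n k d)
  have b6 : ∀ x ∈ (fam6 n k d).map Prod.snd,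
      2 * Tt n k d - Kt n k - n - d - 2 ≤ x ∧ x ≤ 2 * Tt n k d - Kt n k - n - 4 :=
    bd_map (f6Snd_bd n k d)
  simp only [pairsL, List.map_append, List.append_assoc]
  refine (f1_nodup_snd n k d).append ?_ ?_
  · refine (f2_nodup_snd n k d).append ?_ ?_
    · refine (f3_nodup_snd n k d).append ?_ ?_
      · refine (f4_nodup_snd n k d hkp).append ?_ ?_
        · refine (f5_nodup_snd n k d).append (f6_nodup_snd n k d) ?_
          · exact disjoint_of_bounds (fun x hx => le_of_eq (b5 x hx))
              (fun x hx => (b6 x hx).1) (by omega)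
        · simp only [List.disjoint_append_right]
          refine ⟨?_, ?_⟩
          · exact (disjoint_of_bounds (fun x hx => le_of_eq (b5 x hx))
              (fun x hx => (b4 x hx).1) (by omega)).symm
          · exact (disjoint_of_bounds (fun x hx => (b6 x hx).2)
              (fun x hx => (b4 x hx).1) (by omega)).symm
      · simp only [List.disjoint_append_right]
        refine ⟨?_, ?_, ?_⟩
        · exact disjoint_of_bounds (fun x hx => (b3 x hx).2)
            (fun x hx => (b4 x hx).1) (by omega)
        · exact (disjoint_of_bounds (fun x hx => le_of_eq (b5 x hx))
            (fun x hx => (b3 x hx).1) (by omega)).symm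
        · exact disjoint_of_bounds (fun x hx => (b3 x hx).2)
            (fun x hx => (b6 x hx).1) (by omega)
    · simp only [List.disjoint_append_right]
      refine ⟨?_, ?_, ?_, ?_⟩
      · exact (disjoint_of_bounds (fun x hx => (b3 x hx).2)
          (fun x hx => (b2 x hx).1) (by omega)).symm
      · exact disjoint_of_bounds (fun x hx => (b2 x hx).2)
          (fun x hx => (b4 x hx).1) (by omega)
      · exact (disjoint_of_bounds (fun x hx => le_of_eq (b5 x hx))
          (fun x hx => (b2 x hx).1) (by omega)).symm
      · exact disjoint_of_bounds (fun x hx => (b2 x hx).2)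
          (fun x hx => (b6 x hx).1) (by omega)
  · simp only [List.disjoint_append_right]
    refine ⟨?_, ?_, ?_, ?_, ?_⟩
    · exact (disjoint_of_bounds (fun x hx => (b2 x hx).2)
        (fun x hx => (b1 x hx).1) (by omega)).symm
    · exact (disjoint_of_bounds (fun x hx => (b3 x hx).2)
        (fun x hx => (b1 x hx).1) (by omega)).symm
    · exact f1f4_snd_disj n k d
    · exact (disjoint_of_bounds (fun x hx => le_of_eq (b5 x hx))
        (fun x hx => (b1 x hx).1) (by omega)).symm
    · exact (disjoint_of_bounds (fun x hx => (b6 x hx).2)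
        (fun x hx => (b1 x hx).1) (by omega)).symm

lemma pairs_lab_nodup (hd : 0 < d) (hkp : ∀ i, 0 < k i) :
    ((pairsL n k d).map lab).Nodup := by
  have h1 := hT_eq n k d; have h2 := hP_eq n k d; have h3 := hH_eq n k d
  have b1 : ∀ x ∈ (fam1 n k d).map lab,
      2 * Tt n k d - 2 * Kt n k - n - 2 ≤ x ∧ x ≤ 2 * Tt n k d - 2 := bd_map (f1Lab_bd n k d)
  have b2 : ∀ x ∈ (fam2 n k d).map lab,
      8 * Kt n k + 9*d + 5*n + 28 ≤ x ∧ x ≤ 14 * Kt n k + 15*d + 9*n + 50 :=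
    bd_map (f2Lab_bd n k d)
  have b3 : ∀ x ∈ (fam3 n k d).map lab,
      2 * Kt n k + 3*d + 2*n + 9 ≤ x ∧ x ≤ 6 * Kt n k + 7*d + 4*n + 21 :=
    bd_map (f3Lab_bd n k d)
  have b4 : ∀ x ∈ (fam4 n k d).map lab,
      Tt n k d + d - Kt n k - 1 ≤ x ∧ x ≤ Tt n k d + d := bd_map (f4Lab_bd n k d hkp)
  have b5 : ∀ x ∈ (fam5 n k d).map lab, x = d := bd_map (f5Lab_bd n k d)
  have b6 : ∀ x ∈ (fam6 n k d).map lab,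
      7 * Kt n k + 7*d + 4*n + 26 ≤ x ∧ x ≤ 7 * Kt n k + 9*d + 4*n + 22 :=
    bd_map (f6Lab_bd n k d)
  simp only [pairsL, List.map_append, List.append_assoc]
  refine (f1_nodup_lab n k d).append ?_ ?_
  · refine (f2_nodup_lab n k d).append ?_ ?_
    · refine (f3_nodup_lab n k d).append ?_ ?_
      · refine (f4_nodup_lab n k d hkp).append ?_ ?_
        · refine (f5_nodup_lab n k d).append (f6_nodup_lab n k d) ?_
          · exact (disjoint_of_bounds (fun x hx => le_of_eq (b5 x hx))
              (fun x hx => (b6 x hx).1) (by omega))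
        · simp only [List.disjoint_append_right]
          refine ⟨?_, ?_⟩
          · exact (disjoint_of_bounds (fun x hx => le_of_eq (b5 x hx))
              (fun x hx => (b4 x hx).1) (by omega)).symm
          · exact (disjoint_of_bounds (fun x hx => (b6 x hx).2)
              (fun x hx => (b4 x hx).1) (by omega)).symm
      · simp only [List.disjoint_append_right]
        refine ⟨?_, ?_, ?_⟩
        · exact disjoint_of_bounds (fun x hx => (b3 x hx).2)
            (fun x hx => (b4 x hx).1) (by omega)
        · exact (disjoint_of_bounds (fun x hx => le_of_eq (b5 x hx))
            (fun x hx => (b3 x hx).1) (by omega)).symm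
        · exact disjoint_of_bounds (fun x hx => (b3 x hx).2)
            (fun x hx => (b6 x hx).1) (by omega)
    · simp only [List.disjoint_append_right]
      refine ⟨?_, ?_, ?_, ?_⟩
      · exact (disjoint_of_bounds (fun x hx => (b3 x hx).2)
          (fun x hx => (b2 x hx).1) (by omega)).symm
      · exact (disjoint_of_bounds (fun x hx => (b4 x hx).2)
          (fun x hx => (b2 x hx).1) (by omega)).symm
      · exact (disjoint_of_bounds (fun x hx => le_of_eq (b5 x hx))
          (fun x hx => (b2 x hx).1) (by omega)).symm
      · exact (disjoint_of_bounds (fun x hx => (b6 x hx).2)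
          (fun x hx => (b2 x hx).1) (by omega)).symm
  · simp only [List.disjoint_append_right]
    refine ⟨?_, ?_, ?_, ?_, ?_⟩
    · exact (disjoint_of_bounds (fun x hx => (b2 x hx).2)
        (fun x hx => (b1 x hx).1) (by omega)).symm
    · exact (disjoint_of_bounds (fun x hx => (b3 x hx).2)
        (fun x hx => (b1 x hx).1) (by omega)).symm
    · exact (disjoint_of_bounds (fun x hx => (b4 x hx).2)
        (fun x hx => (b1 x hx).1) (by omega)).symm
    · exact (disjoint_of_bounds (fun x hx => le_of_eq (b5 x hx))
        (fun x hx => (b1 x hx).1) (by omega)).symm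
    · exact (disjoint_of_bounds (fun x hx => (b6 x hx).2)
        (fun x hx => (b1 x hx).1) (by omega)).symm

end global2
end DG

namespace DG
section cover
variable (n : ℕ) (k : Fin n → ℕ) (d : ℕ)

lemma fst_coverage (hd : 0 < d) : ∀ v < Tt n k d, ∃ p ∈ pairsL n k d, p.1 = v := by
  intro v hv
  have hnd := pairs_fst_nodup n k d hd
  have hlen : ((pairsL n k d).map Prod.fst).length = Tt n k d := by
    rw [List.length_map]; exact pairsL_len n k d hd
  have hsub : ((pairsL n k d).map Prod.fst).toFinset ⊆ Finset.range (Tt n k d) := by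
    intro x hx
    rw [List.mem_toFinset] at hx
    obtain ⟨p, hp, rfl⟩ := List.mem_map.mp hx
    exact Finset.mem_range.mpr (pairs_fst_lt n k d hd p hp)
  have hcard : ((pairsL n k d).map Prod.fst).toFinset.card = Tt n k d := by
    rw [List.toFinset_card_of_nodup hnd, hlen]
  have heq : ((pairsL n k d).map Prod.fst).toFinset = Finset.range (Tt n k d) :=
    Finset.eq_of_subset_of_card_le hsub (by simp [hcard])
  have : v ∈ ((pairsL n k d).map Prod.fst).toFinset := by
    rw [heq]; exact Finset.mem_range.mpr hv
  rw [List.mem_toFinset] at this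
  obtain ⟨p, hp, he⟩ := List.mem_map.mp this
  exact ⟨p, hp, he⟩

lemma snd_coverage (hd : 0 < d) (hkp : ∀ i, 0 < k i) :
    ∀ v, Tt n k d ≤ v → v < 2 * Tt n k d → ∃ p ∈ pairsL n k d, p.2 = v := by
  intro v hv1 hv2
  have hnd := pairs_snd_nodup n k d hd hkp
  have hlen : ((pairsL n k d).map Prod.snd).length = Tt n k d := by
    rw [List.length_map]; exact pairsL_len n k d hd
  have hsub : ((pairsL n k d).map Prod.snd).toFinset ⊆
      Finset.Ico (Tt n k d) (2 * Tt n k d) := by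
    intro x hx
    rw [List.mem_toFinset] at hx
    obtain ⟨p, hp, rfl⟩ := List.mem_map.mp hx
    have := pairs_snd_bd n k d p hp
    exact Finset.mem_Ico.mpr this
  have hcard : ((pairsL n k d).map Prod.snd).toFinset.card = Tt n k d := by
    rw [List.toFinset_card_of_nodup hnd, hlen]
  have heq : ((pairsL n k d).map Prod.snd).toFinset = Finset.Ico (Tt n k d) (2 * Tt n k d) :=
    Finset.eq_of_subset_of_card_le hsub (by rw [hcard, Nat.card_Ico]; omega)
  have : v ∈ ((pairsL n k d).map Prod.snd).toFinset := by
    rw [heq]; exact Finset.mem_Ico.mpr ⟨hv1, hv2⟩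
  rw [List.mem_toFinset] at this
  obtain ⟨p, hp, he⟩ := List.mem_map.mp this
  exact ⟨p, hp, he⟩

/-- the labeling function on positions -/
def labf (v : ℕ) : ℕ :=
  ((pairsL n k d).find? (fun p => p.1 == v || p.2 == v)).elim 0 lab

lemma labf_eq (hd : 0 < d) (hkp : ∀ i, 0 < k i) {p : ℕ × ℕ} (hp : p ∈ pairsL n k d)
    {v : ℕ} (hv : p.1 = v ∨ p.2 = v) : labf n k d v = lab p := by
  have hex : ((pairsL n k d).find? (fun p => p.1 == v || p.2 == v)).isSome := by
    rw [List.find?_isSome]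
    refine ⟨p, hp, ?_⟩
    rcases hv with h | h <;> simp [h]
  obtain ⟨q, hq⟩ := Option.isSome_iff_exists.mp hex
  have hqmem : q ∈ pairsL n k d := List.mem_of_find?_eq_some hq
  have hqpred := List.find?_some hq
  have hqv : q.1 = v ∨ q.2 = v := by
    rcases Bool.or_eq_true_iff.mp hqpred with h | h
    · exact Or.inl (by simpa using h)
    · exact Or.inr (by simpa using h)
  have hqp : q = p := by
    have hpf := pairs_fst_lt n k d hd p hp
    have hps := pairs_snd_bd n k d p hp
    have hqf := pairs_fst_lt n k d hd q hqmem
    have hqs := pairs_snd_bd n k d q hqmem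
    rcases hqv with h1 | h1 <;> rcases hv with h2 | h2
    · exact List.inj_on_of_nodup_map (pairs_fst_nodup n k d hd) hqmem hp (by omega)
    · omega
    · omega
    · exact List.inj_on_of_nodup_map (pairs_snd_nodup n k d hd hkp) hqmem hp (by omega)
  unfold labf
  rw [hq, hqp]
  rfl

end cover
end DG

namespace DG

lemma countP_range_lt {N i : ℕ} {pred : ℕ → Bool} (hi : i ≤ N)
    (h : ∀ t < N, pred t = true ↔ t < i) : (List.range N).countP pred = i := by
  induction N with
  | zero => simp; omega
  | succ N ih =>
      rw [List.range_succ, List.countP_append]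
      rcases Nat.lt_or_ge N i with hNi | hNi
      · have hiN : i = N + 1 := by omega
        have hcnt : (List.range N).countP pred = N := by
          have : ∀ a ∈ List.range N, pred a = true := by
            intro a ha
            rw [List.mem_range] at ha
            exact (h a (by omega)).mpr (by omega)
          calc (List.range N).countP pred = (List.range N).length :=
                List.countP_eq_length.mpr this
          _ = N := by simp
        have hpN : pred N = true := (h N (by omega)).mpr (by omega)
        simp [hcnt, hpN]
        omega
      · have hpN : pred N = false := by
          by_contra hc
          have : pred N = true := by
            cases hN : pred N
            · exact absurd hN hc
            · rfl
          have := (h N (by omega)).mp this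
          omega
        have := ih (by omega) (fun t ht => h t (by omega))
        simp [hpN, this]

section sfin
variable (n : ℕ) (k : Fin n → ℕ) (d : ℕ)

def Sfin : Finset ℕ := ((pairsL n k d).map lab).toFinset

lemma mem_Sfin {x : ℕ} : x ∈ Sfin n k d ↔ ∃ p ∈ pairsL n k d, lab p = x := by
  simp [Sfin]

lemma f4_sub : fam4 n k d ⊆ pairsL n k d := by
  intro p hp; simp only [pairsL, List.mem_append]; tauto

lemma f5_sub : fam5 n k d ⊆ pairsL n k d := by
  intro p hp; simp only [pairsL, List.mem_append]; tauto

lemma dpair_mem : (Tt n k d - d, Tt n k d) ∈ pairsL n k d :=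
  f5_sub n k d (by simp [fam5])

lemma d_mem_Sfin : d ∈ Sfin n k d := by
  rw [mem_Sfin]
  refine ⟨(Tt n k d - d, Tt n k d), dpair_mem n k d, ?_⟩
  exact f5Lab_bd n k d _ (by simp [fam5])

lemma Sfin_card (hd : 0 < d) (hkp : ∀ i, 0 < k i) : (Sfin n k d).card = Tt n k d := by
  unfold Sfin
  rw [List.toFinset_card_of_nodup (pairs_lab_nodup n k d hd hkp), List.length_map,
    pairsL_len n k d hd]

lemma Sfin_min (hd : 0 < d) (hkp : ∀ i, 0 < k i) (hne : (Sfin n k d).Nonempty) :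
    (Sfin n k d).min' hne = d := by
  refine le_antisymm (Finset.min'_le _ _ (d_mem_Sfin n k d)) ?_
  apply Finset.le_min'
  intro y hy
  obtain ⟨p, hp, rfl⟩ := (mem_Sfin n k d).mp hy
  exact pairs_lab_ge n k d hkp p hp

lemma cl_mem_Sfin {i : ℕ} (hkp : ∀ i, 0 < k i) (hi : i ≤ n + 1) : cl n k d i ∈ Sfin n k d := by
  rw [mem_Sfin]
  refine ⟨(Tt n k d - d - n - 2 + i, cv n k d i), f4_sub n k d ?_, ?_⟩
  · simp only [fam4, List.mem_map, List.mem_range]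
    exact ⟨i, by omega, rfl⟩
  · simp only [lab]
    exact lab_f4 n k d hi hkp

lemma countP_lt_cl (hd : 0 < d) (hkp : ∀ i, 0 < k i) {i : ℕ} (hi : i ≤ n + 1) :
    ((pairsL n k d).map lab).countP (fun y => y < cl n k d i) = Pp n k d + d + i := by
  have h1 := hT_eq n k d; have h2 := hP_eq n k d; have h3 := hH_eq n k d
  have hcl := cl_bounds n k d hkp hi
  have hcl0 := cl_bounds n k d hkp (i := 0) (by omega)
  have hclmono0 : cl n k d 0 ≤ cl n k d i := by
    rcases Nat.eq_zero_or_pos i with h | h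
    · subst h; rfl
    · exact le_of_lt (cl_strict n k d hkp h hi)
  simp only [pairsL, List.map_append, List.countP_append]
  have c1 : ((fam1 n k d).map lab).countP (fun y => y < cl n k d i) = 0 := by
    apply List.countP_eq_zero.mpr
    intro a ha
    have hb : ∀ x ∈ (fam1 n k d).map lab,
        2 * Tt n k d - 2 * Kt n k - n - 2 ≤ x ∧ x ≤ 2 * Tt n k d - 2 :=
      bd_map (f1Lab_bd n k d)
    have := hb a ha
    simp only [decide_eq_true_eq]
    omega
  have c2 : ((fam2 n k d).map lab).countP (fun y => y < cl n k d i) = 0 := by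
    apply List.countP_eq_zero.mpr
    intro a ha
    have hb : ∀ x ∈ (fam2 n k d).map lab,
        8 * Kt n k + 9*d + 5*n + 28 ≤ x ∧ x ≤ 14 * Kt n k + 15*d + 9*n + 50 :=
      bd_map (f2Lab_bd n k d)
    have := hb a ha
    simp only [decide_eq_true_eq]
    omega
  have c3 : ((fam3 n k d).map lab).countP (fun y => y < cl n k d i) = Pp n k d := by
    have hall : ∀ a ∈ (fam3 n k d).map lab, (fun y => decide (y < cl n k d i)) a = true := by
      intro a ha
      have hb : ∀ x ∈ (fam3 n k d).map lab,
          2 * Kt n k + 3*d + 2*n + 9 ≤ x ∧ x ≤ 6 * Kt n k + 7*d + 4*n + 21 :=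
        bd_map (f3Lab_bd n k d)
      have := hb a ha
      simp only [decide_eq_true_eq]
      omega
    calc ((fam3 n k d).map lab).countP _ = ((fam3 n k d).map lab).length :=
          List.countP_eq_length.mpr hall
    _ = Pp n k d := by simp [fam3]
  have c4 : ((fam4 n k d).map lab).countP (fun y => y < cl n k d i) = i := by
    unfold fam4
    rw [List.map_map, List.countP_map]
    apply countP_range_lt (by omega)
    intro t ht
    have hlf := lab_f4 n k d (i := t) (by omega) hkp
    simp only [Function.comp, lab, hlf, decide_eq_true_eq]
    constructor
    · intro hlt
      by_contra hc
      rcases Nat.eq_or_lt_of_le (Nat.le_of_not_lt hc) with h | h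
      · subst h; exact lt_irrefl _ hlt
      · have := cl_strict n k d hkp h (by omega); omega
    · intro hlt
      exact cl_strict n k d hkp hlt hi
  have c5 : ((fam5 n k d).map lab).countP (fun y => y < cl n k d i) = 1 := by
    have hlt : (Tt n k d - (Tt n k d - d)) < cl n k d i := by omega
    simp [fam5, lab, List.countP_cons, hlt]
  have c6 : ((fam6 n k d).map lab).countP (fun y => y < cl n k d i) = d - 1 := by
    have hall : ∀ a ∈ (fam6 n k d).map lab, (fun y => decide (y < cl n k d i)) a = true := by
      intro a ha
      have hb : ∀ x ∈ (fam6 n k d).map lab,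
          7 * Kt n k + 7*d + 4*n + 26 ≤ x ∧ x ≤ 7 * Kt n k + 9*d + 4*n + 22 :=
        bd_map (f6Lab_bd n k d)
      have := hb a ha
      simp only [decide_eq_true_eq]
      omega
    calc ((fam6 n k d).map lab).countP _ = ((fam6 n k d).map lab).length :=
          List.countP_eq_length.mpr hall
    _ = d - 1 := by simp [fam6]
  rw [c1, c2, c3, c4, c5, c6]
  omega

lemma sort_getD_cl (hd : 0 < d) (hkp : ∀ i, 0 < k i) {i : ℕ} (hi : i ≤ n + 1) :
    ((Sfin n k d).sort (· ≤ ·)).getD (Pp n k d + d + i) 0 = cl n k d i := by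
  have hsorted := List.sortedLT_iff_pairwise.mp (Finset.sortedLT_sort (Sfin n k d))
  have hperm : List.Perm ((Sfin n k d).sort (· ≤ ·)) ((pairsL n k d).map lab) :=
    (Finset.sort_perm_toList _ _).trans
      (List.toFinset_toList (pairs_lab_nodup n k d hd hkp))
  have hmem : cl n k d i ∈ (Sfin n k d).sort (· ≤ ·) :=
    (Finset.mem_sort _).mpr (cl_mem_Sfin n k d hkp hi)
  have hgd := getD_strictSorted hsorted hmem
  have hc : ((Sfin n k d).sort (· ≤ ·)).countP (fun y => y < cl n k d i)
      = Pp n k d + d + i := by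
    rw [hperm.countP_eq]
    exact countP_lt_cl n k d hd hkp hi
  rw [hc] at hgd
  exact hgd

end sfin
end DG



/-- `f` is a proper distance `J`-labeling of `G`: `f` is a surjection onto `J`, any two
distinct vertices sharing a label `k` are at graph distance exactly `k`, and every nonzero
label of `J` is used by at least two vertices. -/
def IsProperSetLabeling {V : Type*} (G : SimpleGraph V) (J : Finset ℕ) (f : V → ℕ) : Prop :=
  (∀ v : V, f v ∈ J) ∧ (∀ j ∈ J, ∃ v : V, f v = j) ∧
    (∀ u v : V, u ≠ v → f u = f v → G.dist u v = f u) ∧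
    (∀ j ∈ J, j ≠ 0 → ∃ u v : V, u ≠ v ∧ f u = j ∧ f v = j)

/-- A finite set `S` of nonnegative integers is a δ-set if some finite connected simple
graph admits a proper distance `S`-labeling. -/
def IsDeltaSet (S : Finset ℕ) : Prop :=
  ∃ (V : Type) (_ : Fintype V) (G : SimpleGraph V),
    G.Connected ∧ ∃ f : V → ℕ, IsProperSetLabeling G S f

/-- For any prescribed gaps `k₁ < … < kₙ` and any starting value `d`, there is a δ-set
`S = {s₁ < … < s_l}` with `s₁ = d` and indices `1 ≤ j₁ < … < jₙ < l - 1` such that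
`s_{jᵢ+1} - s_{jᵢ} = kᵢ` for each `i`. Here `(S.sort (· ≤ ·)).getD (p - 1) 0` is the `p`-th
smallest element `s_p` of `S` (1-indexed). -/
theorem exists_deltaSet_with_prescribed_gaps (n : ℕ) (hn : 0 < n) (k : Fin n → ℕ)
    (hkpos : ∀ i, 0 < k i) (hkmono : StrictMono k) (d : ℕ) (hd : 0 < d) :
    ∃ S : Finset ℕ, IsDeltaSet S ∧ ∃ hne : S.Nonempty, S.min' hne = d ∧
      ∃ j : Fin n → ℕ, StrictMono j ∧ (∀ i, 1 ≤ j i) ∧ (∀ i, j i < S.card - 1) ∧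
        ∀ i, (S.sort (· ≤ ·)).getD (j i) 0
          = (S.sort (· ≤ ·)).getD (j i - 1) 0 + k i := by
  classical
  have hT := DG.hT_eq n k d
  have hP := DG.hP_eq n k d
  have hH := DG.hH_eq n k d
  have hconn : (SimpleGraph.pathGraph (2 * DG.Tt n k d)).Connected := by
    have h2T : 2 * DG.Tt n k d = (2 * DG.Tt n k d - 1) + 1 := by omega
    rw [h2T]
    exact SimpleGraph.pathGraph_connected _
  have cover : ∀ w : Fin (2 * DG.Tt n k d),
      ∃ p ∈ DG.pairsL n k d, p.1 = w.val ∨ p.2 = w.val := by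
    intro w
    have hw2 := w.isLt
    rcases Nat.lt_or_ge w.val (DG.Tt n k d) with h | h
    · obtain ⟨p, hp, hfst⟩ := DG.fst_coverage n k d hd w.val h
      exact ⟨p, hp, Or.inl hfst⟩
    · obtain ⟨p, hp, hsnd⟩ := DG.snd_coverage n k d hd hkpos w.val h hw2
      exact ⟨p, hp, Or.inr hsnd⟩
  refine ⟨DG.Sfin n k d, ?_, ⟨d, DG.d_mem_Sfin n k d⟩, DG.Sfin_min n k d hd hkpos _, ?_⟩
  · -- δ-set
    refine ⟨Fin (2 * DG.Tt n k d), inferInstance, SimpleGraph.pathGraph _, hconn,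
      fun v => DG.labf n k d v.val, ?_, ?_, ?_, ?_⟩
    · -- all labels in S
      intro v
      show DG.labf n k d v.val ∈ DG.Sfin n k d
      obtain ⟨p, hp, hv⟩ := cover v
      rw [DG.labf_eq n k d hd hkpos hp hv]
      exact (DG.mem_Sfin n k d).mpr ⟨p, hp, rfl⟩
    · -- surjective
      intro s hs
      obtain ⟨p, hp, rfl⟩ := (DG.mem_Sfin n k d).mp hs
      have h1 : p.1 < 2 * DG.Tt n k d := by
        have := DG.pairs_fst_lt n k d hd p hp; omega
      exact ⟨⟨p.1, h1⟩, DG.labf_eq n k d hd hkpos hp (Or.inl rfl)⟩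
    · -- distance condition
      intro u v huv hfeq
      simp only [] at hfeq
      obtain ⟨p, hp, hpu⟩ := cover u
      obtain ⟨q, hq, hqv⟩ := cover v
      have hfu : DG.labf n k d u.val = DG.lab p :=
        DG.labf_eq n k d hd hkpos hp (by tauto)
      have hfv : DG.labf n k d v.val = DG.lab q :=
        DG.labf_eq n k d hd hkpos hq (by tauto)
      have hpq : p = q := by
        apply List.inj_on_of_nodup_map (DG.pairs_lab_nodup n k d hd hkpos) hp hq
        rw [← hfu, ← hfv]
        exact hfeq
      subst hpq
      have hfst := DG.pairs_fst_lt n k d hd p hp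
      have hsnd := DG.pairs_snd_bd n k d p hp
      have hne : u.val ≠ v.val := fun h => huv (Fin.ext h)
      show (SimpleGraph.pathGraph (2 * DG.Tt n k d)).dist u v = DG.labf n k d u.val
      rw [pathGraph_dist_eq hconn u v, hfu]
      simp only [DG.lab]
      rcases hpu with h1 | h1 <;> rcases hqv with h2 | h2 <;> omega
    · -- every label used twice
      intro s hs _
      obtain ⟨p, hp, rfl⟩ := (DG.mem_Sfin n k d).mp hs
      have hfst := DG.pairs_fst_lt n k d hd p hp
      have hsnd := DG.pairs_snd_bd n k d p hp
      refine ⟨⟨p.1, by omega⟩, ⟨p.2, by omega⟩, ?_, ?_, ?_⟩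
      · intro hc
        have := congrArg Fin.val hc
        simp at this
        omega
      · exact DG.labf_eq n k d hd hkpos hp (Or.inl rfl)
      · exact DG.labf_eq n k d hd hkpos hp (Or.inr rfl)
  · -- indices
    refine ⟨fun i => DG.Pp n k d + d + i.val + 1, ?_, ?_, ?_, ?_⟩
    · intro a b hab
      have : a.val < b.val := hab
      show DG.Pp n k d + d + a.val + 1 < DG.Pp n k d + d + b.val + 1
      omega
    · intro i
      show 1 ≤ DG.Pp n k d + d + i.val + 1
      omega
    · intro i
      show DG.Pp n k d + d + i.val + 1 < (DG.Sfin n k d).card - 1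
      rw [DG.Sfin_card n k d hd hkpos]
      have : i.val < n := i.isLt
      omega
    · intro i
      show ((DG.Sfin n k d).sort (· ≤ ·)).getD (DG.Pp n k d + d + i.val + 1) 0
          = ((DG.Sfin n k d).sort (· ≤ ·)).getD (DG.Pp n k d + d + i.val + 1 - 1) 0 + k i
      have hiv : i.val < n := i.isLt
      have hg1 : ((DG.Sfin n k d).sort (· ≤ ·)).getD (DG.Pp n k d + d + (i.val + 1)) 0
          = DG.cl n k d (i.val + 1) := DG.sort_getD_cl n k d hd hkpos (by omega)
      have hg0 : ((DG.Sfin n k d).sort (· ≤ ·)).getD (DG.Pp n k d + d + i.val) 0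
          = DG.cl n k d i.val := DG.sort_getD_cl n k d hd hkpos (by omega)
      have he1 : DG.Pp n k d + d + i.val + 1 = DG.Pp n k d + d + (i.val + 1) := by omega
      have he0 : DG.Pp n k d + d + (i.val + 1) - 1 = DG.Pp n k d + d + i.val := by omega
      rw [he1, hg1, he0, hg0]
      -- cl (i+1) = cl i + k i
      have hc1 := DG.cl_spec n k d (i := i.val + 1) (by omega)
      have hc0 := DG.cl_spec n k d (i := i.val) (by omega)
      have hKs := DG.KK_succ n k i.val
      have hkk : DG.kk n k i.val = k i := by
        unfold DG.kk
        rw [dif_pos hiv]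
      rw [hkk] at hKs
      omega
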